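/- Let T be a rooted tree with two levels of descendants, with root having n ≥ 2 children, where the i-th child has l_i leaf children. Let l = |{i : l_i = 2}|. Then T is NOT d-balanced if and only if l = (n−1)/2 and l_i ∈ {0,2} for every i ∈ {1,...,n}. -/
import Mathlib


open Finset

open scoped Classical in
noncomputable def closedSum {V : Type*} [Fintype V] (G : SimpleGraph V) (f : V → ℤ) (v : V) : ℤ :=
  f v + ∑ u ∈ Finset.univ.filter (fun u => G.Adj v u), f u

def IsBDF {V : Type*} [Fintype V] (G : SimpleGraph V) (f : V → ℤ) : Prop :=
  (∀ v, f v = -1 ∨ f v = 0 ∨ f v = 1) ∧ ∀ v, closedSum G f v = 0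


/-- Vertices of the depth-two rooted tree: the root, the `n` children of the root,
and for each child `i` its `l i` leaf children. -/
abbrev TwoLevelVtx (n : ℕ) (l : Fin n → ℕ) : Type :=
  Unit ⊕ Fin n ⊕ (Σ i : Fin n, Fin (l i))

/-- The depth-two rooted tree: root adjacent to each child a_i, and each child a_i
adjacent to its l_i leaves. -/
def twoLevelTree (n : ℕ) (l : Fin n → ℕ) : SimpleGraph (TwoLevelVtx n l) :=
  SimpleGraph.fromRel (fun p q =>
    (p = Sum.inl () ∧ ∃ i : Fin n, q = Sum.inr (Sum.inl i)) ∨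
    (∃ (i : Fin n) (j : Fin (l i)), p = Sum.inr (Sum.inl i) ∧ q = Sum.inr (Sum.inr ⟨i, j⟩)))

variable {n : ℕ} {l : Fin n → ℕ}

lemma adj_root (q : TwoLevelVtx n l) :
    (twoLevelTree n l).Adj (Sum.inl ()) q ↔ ∃ i, q = Sum.inr (Sum.inl i) := by
  simp only [twoLevelTree, SimpleGraph.fromRel_adj]
  constructor
  · rintro ⟨hne, (⟨-, i, rfl⟩ | ⟨i, j, h, -⟩) | (⟨h, -⟩ | ⟨i, j, -, h⟩)⟩
    · exact ⟨i, rfl⟩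
    · simp at h
    · rcases q with q | q <;> simp_all
    · simp at h
  · rintro ⟨i, rfl⟩
    simp

lemma adj_child (i : Fin n) (q : TwoLevelVtx n l) :
    (twoLevelTree n l).Adj (Sum.inr (Sum.inl i)) q ↔
      q = Sum.inl () ∨ ∃ j : Fin (l i), q = Sum.inr (Sum.inr ⟨i, j⟩) := by
  simp only [twoLevelTree, SimpleGraph.fromRel_adj]
  constructor
  · rintro ⟨hne, (⟨h, -⟩ | ⟨i', j, h, rfl⟩) | (⟨rfl, i', h⟩ | ⟨i', j, h1, h2⟩)⟩
    · simp at h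
    · obtain rfl : i = i' := by simpa using h
      exact Or.inr ⟨j, rfl⟩
    · exact Or.inl rfl
    · simp at h2
  · rintro (rfl | ⟨j, rfl⟩) <;> simp

lemma adj_leaf (i : Fin n) (j : Fin (l i)) (q : TwoLevelVtx n l) :
    (twoLevelTree n l).Adj (Sum.inr (Sum.inr ⟨i, j⟩)) q ↔ q = Sum.inr (Sum.inl i) := by
  simp only [twoLevelTree, SimpleGraph.fromRel_adj]
  constructor
  · rintro ⟨hne, (⟨h, -⟩ | ⟨i', j', h, -⟩) | (⟨rfl, i', h⟩ | ⟨i', j', rfl, h⟩)⟩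
    · simp at h
    · simp at h
    · simp at h
    · obtain ⟨rfl, -⟩ : i = i' ∧ HEq j j' := by simpa [Sigma.mk.inj_iff] using h
      rfl
  · rintro rfl
    simp

open scoped Classical in
lemma closedSum_root (f : TwoLevelVtx n l → ℤ) :
    closedSum (twoLevelTree n l) f (Sum.inl ()) =
      f (Sum.inl ()) + ∑ i, f (Sum.inr (Sum.inl i)) := by
  rw [closedSum, Finset.sum_filter]
  congr 1
  rw [Fintype.sum_sum_type, Fintype.sum_sum_type, ← Finset.univ_sigma_univ, Finset.sum_sigma]
  simp [adj_root]

open scoped Classical in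
lemma closedSum_child (f : TwoLevelVtx n l → ℤ) (i : Fin n) :
    closedSum (twoLevelTree n l) f (Sum.inr (Sum.inl i)) =
      f (Sum.inr (Sum.inl i)) + f (Sum.inl ()) +
        ∑ j, f (Sum.inr (Sum.inr ⟨i, j⟩)) := by
  rw [closedSum, Finset.sum_filter, add_assoc]
  congr 1
  rw [Fintype.sum_sum_type, Fintype.sum_sum_type, ← Finset.univ_sigma_univ, Finset.sum_sigma]
  have h3 : ∀ (i' : Fin n) (j' : Fin (l i')),
      (twoLevelTree n l).Adj (Sum.inr (Sum.inl i)) (Sum.inr (Sum.inr ⟨i', j'⟩)) ↔ i' = i := by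
    intro i' j'
    rw [adj_child]
    constructor
    · rintro (h | ⟨j, h⟩)
      · simp at h
      · obtain ⟨h, -⟩ : i' = i ∧ HEq j' j := by simpa [Sigma.mk.inj_iff] using h
        exact h
    · rintro rfl; exact Or.inr ⟨j', rfl⟩
  have h4 : ∀ i' : Fin n,
      (∑ j' : Fin (l i'), if (twoLevelTree n l).Adj (Sum.inr (Sum.inl i))
          (Sum.inr (Sum.inr ⟨i', j'⟩)) then f (Sum.inr (Sum.inr ⟨i', j'⟩)) else 0)
      = if i' = i then ∑ j' : Fin (l i'), f (Sum.inr (Sum.inr ⟨i', j'⟩)) else 0 := by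
    intro i'
    simp only [h3]
    split <;> simp
  rw [Finset.sum_congr rfl fun i' _ => h4 i', Finset.sum_ite_eq' Finset.univ i]
  simp [adj_child]

open scoped Classical in
lemma closedSum_leaf (f : TwoLevelVtx n l → ℤ) (i : Fin n) (j : Fin (l i)) :
    closedSum (twoLevelTree n l) f (Sum.inr (Sum.inr ⟨i, j⟩)) =
      f (Sum.inr (Sum.inr ⟨i, j⟩)) + f (Sum.inr (Sum.inl i)) := by
  rw [closedSum, Finset.sum_filter]
  congr 1
  rw [Fintype.sum_sum_type, Fintype.sum_sum_type, ← Finset.univ_sigma_univ, Finset.sum_sigma]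
  simp [adj_leaf]

lemma total_sum (f : TwoLevelVtx n l → ℤ) :
    ∑ v, f v = f (Sum.inl ()) + (∑ i, f (Sum.inr (Sum.inl i)) +
      ∑ i : Fin n, ∑ j : Fin (l i), f (Sum.inr (Sum.inr ⟨i, j⟩))) := by
  rw [Fintype.sum_sum_type, Fintype.sum_sum_type, ← Finset.univ_sigma_univ, Finset.sum_sigma]
  simp

lemma bdf_leaf (f : TwoLevelVtx n l → ℤ) (hf : IsBDF (twoLevelTree n l) f)
    (i : Fin n) (j : Fin (l i)) :
    f (Sum.inr (Sum.inr ⟨i, j⟩)) = - f (Sum.inr (Sum.inl i)) := by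
  have := hf.2 (Sum.inr (Sum.inr ⟨i, j⟩))
  rw [closedSum_leaf] at this
  linarith

lemma bdf_child (f : TwoLevelVtx n l → ℤ) (hf : IsBDF (twoLevelTree n l) f) (i : Fin n) :
    ((l i : ℤ) - 1) * f (Sum.inr (Sum.inl i)) = f (Sum.inl ()) := by
  have h := hf.2 (Sum.inr (Sum.inl i))
  rw [closedSum_child] at h
  have hs : ∑ j : Fin (l i), f (Sum.inr (Sum.inr ⟨i, j⟩))
      = - (l i : ℤ) * f (Sum.inr (Sum.inl i)) := by
    rw [Finset.sum_congr rfl fun j _ => bdf_leaf f hf i j]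
    simp [Finset.sum_const, mul_comm]
  rw [hs] at h
  linarith

lemma bdf_root (f : TwoLevelVtx n l → ℤ) (hf : IsBDF (twoLevelTree n l) f) :
    f (Sum.inl ()) + ∑ i, f (Sum.inr (Sum.inl i)) = 0 := by
  have := hf.2 (Sum.inl ())
  rwa [closedSum_root] at this

lemma bdf_weight (f : TwoLevelVtx n l → ℤ) (hf : IsBDF (twoLevelTree n l) f) :
    ∑ v, f v = (1 - (n : ℤ)) * f (Sum.inl ()) := by
  rw [total_sum]
  have h1 : ∑ i : Fin n, ∑ j : Fin (l i), f (Sum.inr (Sum.inr ⟨i, j⟩))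
      = ∑ i : Fin n, (- (l i : ℤ) * f (Sum.inr (Sum.inl i))) := by
    refine Finset.sum_congr rfl fun i _ => ?_
    rw [Finset.sum_congr rfl fun j _ => bdf_leaf f hf i j]
    simp [Finset.sum_const, mul_comm]
  have h2 : ∀ i : Fin n, - (l i : ℤ) * f (Sum.inr (Sum.inl i))
      = - f (Sum.inl ()) - f (Sum.inr (Sum.inl i)) := by
    intro i
    have := bdf_child f hf i
    linarith
  rw [h1, Finset.sum_congr rfl fun i _ => h2 i]
  have h3 := bdf_root f hf
  rw [Finset.sum_sub_distrib, Finset.sum_const, Finset.card_univ, Fintype.card_fin,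
    nsmul_eq_mul]
  linarith

lemma sum_ite_card (P : Fin n → Prop) [DecidablePred P] :
    ∑ i, (if P i then (-1 : ℤ) else 1)
      = (n : ℤ) - 2 * ((Finset.univ.filter P).card : ℤ) := by
  have key : ∀ i, (if P i then (-1 : ℤ) else 1) = 1 - 2 * (if P i then (1 : ℤ) else 0) :=
    fun i => by split <;> norm_num
  simp only [key]
  rw [Finset.sum_sub_distrib, Finset.sum_const, ← Finset.mul_sum, Finset.sum_boole,
    Finset.card_univ, Fintype.card_fin, nsmul_eq_mul]
  ring


open scoped Classical in
/-- A depth-two rooted tree with `n ≥ 2` children of the root is NOT d-balanced iff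
the number `l` of children having exactly two leaf children satisfies `l = (n-1)/2`
and every child has either 0 or 2 leaf children. -/
theorem twoLevelTree_not_d_balanced_iff (n : ℕ) (hn : 2 ≤ n) (l : Fin n → ℕ) :
    ¬ IsGreatest {w : ℤ | ∃ f : TwoLevelVtx n l → ℤ,
        IsBDF (twoLevelTree n l) f ∧ w = ∑ v, f v} 0 ↔
      (2 * (Finset.univ.filter (fun i : Fin n => l i = 2)).card = n - 1 ∧
        ∀ i : Fin n, l i = 0 ∨ l i = 2) := by
  constructor
  · -- contrapositive: ¬cond → IsGreatest
    intro hng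
    by_contra hcond
    apply hng
    constructor
    · exact ⟨fun _ => 0, ⟨fun v => Or.inr (Or.inl rfl), fun v => by simp [closedSum]⟩, by simp⟩
    · rintro w ⟨f, hf, rfl⟩
      rw [bdf_weight f hf]
      rcases hf.1 (Sum.inl ()) with hr | hr | hr
      · -- f(root) = -1 : this forces the condition, contradiction
        exfalso
        apply hcond
        have hai : ∀ i : Fin n, (l i = 2 ∧ f (Sum.inr (Sum.inl i)) = -1) ∨
            (l i = 0 ∧ f (Sum.inr (Sum.inl i)) = 1) := by
          intro i
          have hc := bdf_child f hf i
          rw [hr] at hc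
          rcases hf.1 (Sum.inr (Sum.inl i)) with ha | ha | ha <;> rw [ha] at hc
          · left
            refine ⟨?_, ha⟩
            have : (l i : ℤ) = 2 := by linarith
            exact_mod_cast this
          · exfalso; simp at hc
          · right
            refine ⟨?_, ha⟩
            have : (l i : ℤ) = 0 := by linarith
            exact_mod_cast this
        refine ⟨?_, fun i => Or.symm ((hai i).imp And.left And.left)⟩
        have hsum : ∑ i, f (Sum.inr (Sum.inl i)) = 1 := by
          have := bdf_root f hf
          rw [hr] at this
          linarith
        have heq : ∀ i : Fin n, f (Sum.inr (Sum.inl i))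
            = if l i = 2 then (-1 : ℤ) else 1 := by
          intro i
          rcases hai i with ⟨h2, hv⟩ | ⟨h0, hv⟩
          · rw [hv, if_pos h2]
          · rw [hv, if_neg (by omega)]
        rw [Finset.sum_congr rfl fun i _ => heq i, sum_ite_card] at hsum
        have : 2 * ((Finset.univ.filter (fun i : Fin n => l i = 2)).card : ℤ) = (n : ℤ) - 1 := by
          linarith
        omega
      · rw [hr]; simp
      · rw [hr]
        have : (1 : ℤ) - n ≤ 0 := by
          have : (2 : ℤ) ≤ n := by exact_mod_cast hn
          linarith
        linarith
  · rintro ⟨hcard, hl⟩ ⟨-, hub⟩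
    set f : TwoLevelVtx n l → ℤ := fun v =>
      match v with
      | Sum.inl _ => -1
      | Sum.inr (Sum.inl i) => if l i = 2 then -1 else 1
      | Sum.inr (Sum.inr ⟨i, _⟩) => if l i = 2 then 1 else -1 with hfdef
    have hbdf : IsBDF (twoLevelTree n l) f := by
      constructor
      · rintro (v | v | ⟨i, j⟩)
        · simp [hfdef]
        · simp only [hfdef]; split <;> simp
        · simp only [hfdef]; split <;> simp
      · rintro (v | v | ⟨i, j⟩)
        · rw [closedSum_root]
          have : ∑ i : Fin n, f (Sum.inr (Sum.inl i))
              = ∑ i : Fin n, (if l i = 2 then (-1 : ℤ) else 1) := rfl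
          rw [this, sum_ite_card]
          have h2 : 2 * ((Finset.univ.filter (fun i : Fin n => l i = 2)).card : ℤ)
              = (n : ℤ) - 1 := by
            have := hcard
            omega
          simp only [hfdef]
          linarith
        · rw [closedSum_child]
          have hs : ∑ j : Fin (l v), f (Sum.inr (Sum.inr ⟨v, j⟩))
              = (l v : ℤ) * (if l v = 2 then (1 : ℤ) else -1) := by
            rw [Finset.sum_const, Finset.card_univ, Fintype.card_fin, nsmul_eq_mul]
          rw [hs]
          simp only [hfdef]
          rcases hl v with h | h <;> rw [h] <;> norm_num
        · rw [closedSum_leaf]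
          simp only [hfdef]
          split <;> ring
    have hmem : ((n : ℤ) - 1) ∈ {w : ℤ | ∃ f : TwoLevelVtx n l → ℤ,
        IsBDF (twoLevelTree n l) f ∧ w = ∑ v, f v} := by
      refine ⟨f, hbdf, ?_⟩
      rw [bdf_weight f hbdf]
      simp only [hfdef]
      ring
    have := hub hmem
    have h2 : (2 : ℤ) ≤ n := by exact_mod_cast hn
    linarith
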